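/- Let T₁, T₂, T₃ be n×n complex matrices and Y ∈ su(n) satisfy T₁ = [T₂,Y], T₂ = [Y,T₁], and [Y,T₃] = 0. Then for every θ ∈ ℝ, setting U(θ) = exp(θY) ∈ SU(n) and A(θ) = [[cos θ, −sin θ, 0],[sin θ, cos θ, 0],[0,0,1]] ∈ SO(3), one has Σ_j A(θ)_{ij} T_j = U(θ)⁻¹ Tᵢ U(θ) for all i ∈ {1,2,3}. In particular, any solution of Nahm's equations whose components satisfy these three relations pointwise is axially symmetric around the third axis. -/

import Mathlib

open Matrix Set

open NormedSpace in
private lemma semiconj_exp {m : Type*} [Fintype m] [DecidableEq m]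
    {B A A' : Matrix m m ℂ} (h : B * A = A' * B) :
    B * exp A = exp A' * B := by
  letI : SeminormedRing (Matrix m m ℂ) := Matrix.linftyOpSemiNormedRing
  letI : NormedRing (Matrix m m ℂ) := Matrix.linftyOpNormedRing
  letI : NormedAlgebra ℂ (Matrix m m ℂ) := Matrix.linftyOpNormedAlgebra
  have hsc : SemiconjBy B A A' := h
  rw [exp_eq_tsum ℂ]
  beta_reduce
  erw [← (expSeries_summable' (𝕂 := ℂ) A).tsum_mul_left B,
    ← (expSeries_summable' (𝕂 := ℂ) A').tsum_mul_right B]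
  exact tsum_congr fun k => by
    rw [mul_smul_comm, smul_mul_assoc, (hsc.pow_right k).eq]

open NormedSpace in
private lemma exp_smul_one' {m : Type*} [Fintype m] [DecidableEq m] (c : ℂ) :
    exp (c • (1 : Matrix m m ℂ)) = Complex.exp c • (1 : Matrix m m ℂ) := by
  have h1 : exp (c • (1 : m → ℂ)) = fun _ => Complex.exp c := by
    rw [Pi.exp_def]
    funext i
    simp [← Complex.exp_eq_exp_ℂ]
  have h2 : (c • fun _ : m => (1:ℂ)) = c • (1 : m → ℂ) := rfl
  rw [← Matrix.diagonal_one, ← Matrix.diagonal_smul, Matrix.exp_diagonal, h2, h1]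
  rw [show (fun _ : m => Complex.exp c) = Complex.exp c • (fun _ => (1:ℂ)) from
      funext fun i => by simp, Matrix.diagonal_smul, Matrix.diagonal_one]

/-- The rotation by angle `θ` about the third coordinate axis. -/
noncomputable def rotZ (θ : ℝ) : Matrix (Fin 3) (Fin 3) ℝ :=
  !![Real.cos θ, -Real.sin θ, 0; Real.sin θ, Real.cos θ, 0; 0, 0, 1]

theorem axial_symmetry_from_infinitesimal (n : ℕ)
    (Y : Matrix (Fin n) (Fin n) ℂ) (hY : Y.trace = 0 ∧ Yᴴ = -Y)
    (T : Fin 3 → Matrix (Fin n) (Fin n) ℂ)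
    (h1 : T 0 = T 1 * Y - Y * T 1)
    (h2 : T 1 = Y * T 0 - T 0 * Y)
    (h3 : Y * T 2 - T 2 * Y = 0) :
    ∀ θ : ℝ,
      NormedSpace.exp (θ • Y) * (NormedSpace.exp (θ • Y))ᴴ = 1 ∧
      (NormedSpace.exp (θ • Y)).det = 1 ∧
      ∀ i : Fin 3, ∑ j : Fin 3, rotZ θ i j • T j =
        (NormedSpace.exp (θ • Y))⁻¹ * T i * NormedSpace.exp (θ • Y) := by
  obtain ⟨htr, hsk⟩ := hY
  intro θ
  open NormedSpace in
  have hsmul : ∀ (r : ℝ) (M : Matrix (Fin n) (Fin n) ℂ), r • M = (r : ℂ) • M := fun r M => by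
    rw [← algebraMap_smul ℂ r M, Complex.coe_algebraMap]
  set E := NormedSpace.exp (θ • Y) with hE
  set F := NormedSpace.exp (-(θ • Y)) with hF
  have hEF : E * F = 1 := by
    rw [hE, hF, ← Matrix.exp_add_of_commute _ _ ((Commute.refl (θ • Y)).neg_right),
      add_neg_cancel, NormedSpace.exp_zero]
  have hFE : F * E = 1 := by
    rw [hE, hF, ← Matrix.exp_add_of_commute _ _ ((Commute.refl (θ • Y)).neg_left),
      neg_add_cancel, NormedSpace.exp_zero]
  have hCT : Eᴴ = F := by
    rw [hE, hF, ← Matrix.exp_conjTranspose]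
    congr 1
    rw [Matrix.conjTranspose_smul, hsk, star_trivial, smul_neg]
  have hinv : E⁻¹ = F := by
    rw [hE, hF, Matrix.exp_neg]
  refine ⟨by rw [hCT, hEF], ?_, ?_⟩
  · -- determinant
    have hH : (Complex.I • Y).IsHermitian := by
      unfold Matrix.IsHermitian
      rw [Matrix.conjTranspose_smul, hsk, Complex.star_def, Complex.conj_I]
      simp
    set U : Matrix (Fin n) (Fin n) ℂ := (hH.eigenvectorUnitary : Matrix (Fin n) (Fin n) ℂ)
      with hU
    set v : Fin n → ℂ := RCLike.ofReal ∘ hH.eigenvalues with hv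
    have hspec : Complex.I • Y = U * diagonal v * star U := hH.spectral_theorem
    have hUU : star U * U = 1 := Matrix.mem_unitaryGroup_iff'.mp hH.eigenvectorUnitary.2
    have hUU' : U * star U = 1 := Matrix.mem_unitaryGroup_iff.mp hH.eigenvectorUnitary.2
    set c : ℂ := (θ : ℂ) * (-Complex.I) with hc
    have hcI : c * Complex.I = (θ : ℂ) := by
      rw [hc]; ring_nf; rw [Complex.I_sq]; ring
    have hY' : θ • Y = U * diagonal (c • v) * star U := by
      calc θ • Y = (c * Complex.I) • Y := by rw [hcI, hsmul θ Y]
        _ = c • (Complex.I • Y) := (smul_smul _ _ _).symm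
        _ = c • (U * diagonal v * star U) := by rw [hspec]
        _ = (c • (U * diagonal v)) * star U := (smul_mul_assoc _ _ _).symm
        _ = (U * (c • diagonal v)) * star U := by rw [mul_smul_comm]
        _ = U * diagonal (c • v) * star U := by rw [Matrix.diagonal_smul]
    have hsemi : U * NormedSpace.exp (diagonal (c • v)) =
        NormedSpace.exp (U * diagonal (c • v) * star U) * U := by
      refine semiconj_exp ?_
      rw [mul_assoc, mul_assoc, hUU, mul_one]
    have hEU : E = U * NormedSpace.exp (diagonal (c • v)) * star U := by
      rw [hE, hY']
      calc NormedSpace.exp (U * diagonal (c • v) * star U)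
          = NormedSpace.exp (U * diagonal (c • v) * star U) * (U * star U) := by
            rw [hUU', mul_one]
        _ = (NormedSpace.exp (U * diagonal (c • v) * star U) * U) * star U :=
            (mul_assoc _ _ _).symm
        _ = U * NormedSpace.exp (diagonal (c • v)) * star U := by rw [← hsemi]
    have hexpd : NormedSpace.exp (diagonal (c • v)) =
        diagonal (fun k => Complex.exp (c * v k)) := by
      rw [Matrix.exp_diagonal]
      congr 1
      rw [Pi.exp_def]
      funext k
      simp [← Complex.exp_eq_exp_ℂ]
    have hsumv : ∑ k, v k = 0 := by
      have t1 : (diagonal v).trace = (Complex.I • Y).trace := by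
        rw [hspec, Matrix.trace_mul_cycle, hUU, one_mul]
      have t2 : (Complex.I • Y).trace = 0 := by
        rw [Matrix.trace_smul, htr, smul_zero]
      rw [Matrix.trace_diagonal] at t1
      rw [t1, t2]
    rw [hEU, hexpd, Matrix.det_mul, Matrix.det_mul, Matrix.det_diagonal]
    have : ∏ k, Complex.exp (c * v k) = 1 := by
      rw [← Complex.exp_sum, ← Finset.mul_sum, hsumv, mul_zero, Complex.exp_zero]
    rw [this, mul_one, ← Matrix.det_mul, hUU', Matrix.det_one]
  · -- conjugation
    have hA : T 0 * Y = Y * T 0 - T 1 := by rw [h2]; abel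
    have hB : T 1 * Y = Y * T 1 + T 0 := by rw [h1]; abel
    have hC : T 2 * Y = Y * T 2 := (sub_eq_zero.mp h3).symm
    set P : Matrix (Fin n) (Fin n) ℂ := T 0 - Complex.I • T 1 with hPdef
    set Q : Matrix (Fin n) (Fin n) ℂ := T 0 + Complex.I • T 1 with hQdef
    have key : ∀ (S : Matrix (Fin n) (Fin n) ℂ) (c : ℂ), S * Y = (Y + c • 1) * S →
        F * S * E = Complex.exp ((θ : ℂ) * c) • S := by
      intro S c hSc
      have h' : S * (θ • Y) = ((θ • Y) + ((θ : ℂ) * c) • 1) * S := by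
        rw [hsmul θ Y, mul_smul_comm, hSc]
        simp only [add_mul, smul_mul_assoc, one_mul, smul_add, smul_smul]
      have hsemi := semiconj_exp h'
      have hsplit : NormedSpace.exp ((θ • Y) + ((θ : ℂ) * c) • 1) =
          Complex.exp ((θ : ℂ) * c) • E := by
        rw [Matrix.exp_add_of_commute _ _ ((Commute.one_right (θ • Y)).smul_right _),
          exp_smul_one', mul_smul_comm, mul_one, hE]
      calc F * S * E = F * (S * E) := by rw [mul_assoc]
        _ = F * (Complex.exp ((θ : ℂ) * c) • (E * S)) := by
            rw [hsemi, hsplit, smul_mul_assoc]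
        _ = Complex.exp ((θ : ℂ) * c) • (F * E * S) := by
            rw [mul_smul_comm, mul_assoc]
        _ = _ := by rw [hFE, one_mul]
    have hP : P * Y = (Y + (-Complex.I) • 1) * P := by
      simp only [hPdef, sub_mul, mul_sub, add_mul, smul_mul_assoc, mul_smul_comm, one_mul,
        hA, hB]
      match_scalars <;>
        (try ring1) <;> (ring_nf; simp only [Complex.I_sq]; try ring_nf) <;> try norm_num
    have hQ : Q * Y = (Y + Complex.I • 1) * Q := by
      simp only [hQdef, add_mul, mul_add, smul_mul_assoc, mul_smul_comm, one_mul, hA, hB]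
      match_scalars <;>
        (try ring1) <;> (ring_nf; simp only [Complex.I_sq]; try ring_nf) <;> try norm_num
    have kP := key P (-Complex.I) hP
    have kQ := key Q Complex.I hQ
    have kT2 : F * T 2 * E = T 2 := by
      have := key (T 2) 0 (by rw [hC]; simp)
      simpa using this
    have heP : Complex.exp ((θ : ℂ) * -Complex.I) =
        (Real.cos θ : ℂ) - (Real.sin θ : ℂ) * Complex.I := by
      rw [show (θ : ℂ) * -Complex.I = (-θ : ℂ) * Complex.I by ring, Complex.exp_mul_I]
      push_cast
      rw [Complex.cos_neg, Complex.sin_neg, ← Complex.ofReal_cos, ← Complex.ofReal_sin]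
      ring
    have heQ : Complex.exp ((θ : ℂ) * Complex.I) =
        (Real.cos θ : ℂ) + (Real.sin θ : ℂ) * Complex.I := by
      rw [Complex.exp_mul_I, ← Complex.ofReal_cos, ← Complex.ofReal_sin]
    rw [heP] at kP
    rw [heQ] at kQ
    intro i
    rw [hinv]
    fin_cases i
    · have hd : T 0 = (2⁻¹ : ℂ) • P + (2⁻¹ : ℂ) • Q := by
        simp only [hPdef, hQdef]
        match_scalars <;>
        (try ring1) <;> (ring_nf; simp only [Complex.I_sq]; try ring_nf) <;> try norm_num
      rw [Fin.sum_univ_three]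
      show rotZ θ 0 0 • T 0 + rotZ θ 0 1 • T 1 + rotZ θ 0 2 • T 2 = F * T 0 * E
      conv_rhs => rw [hd]
      rw [mul_add, add_mul, Matrix.mul_smul, Matrix.mul_smul, Matrix.smul_mul,
        Matrix.smul_mul, kP, kQ]
      simp only [rotZ, Matrix.cons_val', Matrix.cons_val_zero, Matrix.cons_val_one,
        Matrix.head_cons, Matrix.empty_val', Matrix.cons_val_fin_one, Matrix.head_fin_const,
        Matrix.of_apply, Matrix.cons_val_two, Matrix.tail_cons]
      rw [hsmul, hsmul, hsmul, hPdef, hQdef]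
      match_scalars <;>
        (try ring1) <;> (ring_nf; simp only [Complex.I_sq]; try ring_nf) <;> try norm_num
    · have hd : T 1 = (2⁻¹ * Complex.I) • P + (-(2⁻¹ * Complex.I)) • Q := by
        simp only [hPdef, hQdef]
        match_scalars <;>
        (try ring1) <;> (ring_nf; simp only [Complex.I_sq]; try ring_nf) <;> try norm_num
      rw [Fin.sum_univ_three]
      show rotZ θ 1 0 • T 0 + rotZ θ 1 1 • T 1 + rotZ θ 1 2 • T 2 = F * T 1 * E
      conv_rhs => rw [hd]
      rw [mul_add, add_mul, Matrix.mul_smul, Matrix.mul_smul, Matrix.smul_mul,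
        Matrix.smul_mul, kP, kQ]
      simp only [rotZ, Matrix.cons_val', Matrix.cons_val_zero, Matrix.cons_val_one,
        Matrix.head_cons, Matrix.empty_val', Matrix.cons_val_fin_one, Matrix.head_fin_const,
        Matrix.of_apply, Matrix.cons_val_two, Matrix.tail_cons]
      rw [hsmul, hsmul, hsmul, hPdef, hQdef]
      match_scalars <;>
        (try ring1) <;> (ring_nf; simp only [Complex.I_sq]; try ring_nf) <;> try norm_num
    · rw [Fin.sum_univ_three]
      show rotZ θ 2 0 • T 0 + rotZ θ 2 1 • T 1 + rotZ θ 2 2 • T 2 = F * T 2 * E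
      rw [kT2]
      simp only [rotZ, Matrix.cons_val', Matrix.cons_val_zero, Matrix.cons_val_one,
        Matrix.head_cons, Matrix.empty_val', Matrix.cons_val_fin_one, Matrix.head_fin_const,
        Matrix.of_apply, Matrix.cons_val_two, Matrix.tail_cons]
      simp
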